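/- For τ ∈ (0,1), τ · ∫₀¹ x^{τ−1}(1−x)^τ dx = τ·Γ(τ+1)·Γ(τ)/Γ(2τ+1), and consequently lim_{l→∞} (1/l^{2τ}) ∑_{s=1}^{l} (s^τ − (s−1)^τ)(l − s + 1)^τ = τ·Γ(1+τ)·Γ(τ)/Γ(1+2τ). -/

import Mathlib

open Real Filter

open intervalIntegral MeasureTheory in
private lemma aux_integrable {τ : ℝ} (hτ0 : 0 < τ) (hτ1 : τ < 1) (c a b : ℝ) :
    IntervalIntegrable (fun t => τ * t ^ (τ - 1) * (c - t) ^ τ) volume a b := by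
  have h1 : IntervalIntegrable (fun t : ℝ => τ * t ^ (τ - 1)) volume a b :=
    (intervalIntegral.intervalIntegrable_rpow' (by linarith)).const_mul τ
  have h2 : ContinuousOn (fun t : ℝ => (c - t) ^ τ) (Set.uIcc a b) :=
    ((Real.continuous_rpow_const hτ0.le).comp (continuous_const.sub continuous_id)).continuousOn
  exact h1.mul_continuousOn h2

private lemma ftc_piece {τ : ℝ} (hτ0 : 0 < τ) (a b : ℝ) :
    ∫ t in a..b, τ * t ^ (τ - 1) = b ^ τ - a ^ τ := by
  rw [intervalIntegral.integral_const_mul, integral_rpow (Or.inl (by linarith)),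
    sub_add_cancel, mul_div_cancel₀ _ hτ0.ne']

private lemma aux_scaled {τ : ℝ} (hτ0 : 0 < τ) {c : ℝ} (hc : 0 < c) :
    ∫ t in (0:ℝ)..c, τ * t ^ (τ - 1) * (c - t) ^ τ
      = c ^ (2 * τ) * (τ * ∫ x in (0:ℝ)..1, x ^ (τ - 1) * (1 - x) ^ τ) := by
  have key := intervalIntegral.smul_integral_comp_mul_left
    (f := fun t => τ * t ^ (τ - 1) * (c - t) ^ τ) (a := 0) (b := 1) c
  rw [mul_zero, mul_one] at key
  rw [← key]
  have hcongr : ∀ x ∈ Set.uIcc (0:ℝ) 1,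
      τ * (c * x) ^ (τ - 1) * (c - c * x) ^ τ
        = (c ^ (2 * τ - 1) * τ) * (x ^ (τ - 1) * (1 - x) ^ τ) := by
    intro x hx
    rw [Set.uIcc_of_le (by norm_num)] at hx
    have hx0 : (0:ℝ) ≤ x := hx.1
    have hx1 : (0:ℝ) ≤ 1 - x := by linarith [hx.2]
    calc τ * (c * x) ^ (τ - 1) * (c - c * x) ^ τ
        = τ * (c ^ (τ - 1) * x ^ (τ - 1)) * (c ^ τ * (1 - x) ^ τ) := by
          rw [Real.mul_rpow hc.le hx0, show c - c * x = c * (1 - x) by ring,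
            Real.mul_rpow hc.le hx1]
      _ = (c ^ (τ - 1) * c ^ τ * τ) * (x ^ (τ - 1) * (1 - x) ^ τ) := by ring
      _ = (c ^ (2 * τ - 1) * τ) * (x ^ (τ - 1) * (1 - x) ^ τ) := by
          rw [← Real.rpow_add hc, show τ - 1 + τ = 2 * τ - 1 by ring]
  rw [intervalIntegral.integral_congr hcongr, intervalIntegral.integral_const_mul,
    smul_eq_mul]
  have hcc : c * c ^ (2 * τ - 1) = c ^ (2 * τ) := by
    nth_rewrite 1 [← Real.rpow_one c]
    rw [← Real.rpow_add hc]
    norm_num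
  rw [← hcc]
  ring

private lemma beta_part {τ : ℝ} (hτ0 : 0 < τ) :
    ∫ x in (0:ℝ)..1, x ^ (τ - 1) * (1 - x) ^ τ
      = Real.Gamma τ * Real.Gamma (τ + 1) / Real.Gamma (2 * τ + 1) := by
  have hne : Real.Gamma (2 * τ + 1) ≠ 0 := (Real.Gamma_pos_of_pos (by linarith)).ne'
  have hs : 0 < Complex.re (τ : ℂ) := by simpa using hτ0
  have ht : 0 < Complex.re (((τ + 1 : ℝ)) : ℂ) := by simpa using by linarith
  have hbi : Complex.betaIntegral (τ : ℂ) ((τ + 1 : ℝ) : ℂ)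
      = ((∫ x in (0:ℝ)..1, x ^ (τ - 1) * (1 - x) ^ τ : ℝ) : ℂ) := by
    rw [Complex.betaIntegral, ← intervalIntegral.integral_ofReal]
    apply intervalIntegral.integral_congr
    intro x hx
    rw [Set.uIcc_of_le (by norm_num : (0:ℝ) ≤ 1)] at hx
    have h1 : (0:ℝ) ≤ x := hx.1
    have h2 : (0:ℝ) ≤ 1 - x := by linarith [hx.2]
    simp only [Complex.ofReal_mul, ← Complex.ofReal_one, ← Complex.ofReal_sub]
    rw [Complex.ofReal_cpow h1, Complex.ofReal_cpow h2]
    push_cast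
    norm_num
  have h := Complex.Gamma_mul_Gamma_eq_betaIntegral hs ht
  rw [hbi, show (τ : ℂ) + ((τ + 1 : ℝ) : ℂ) = ((2 * τ + 1 : ℝ) : ℂ) by push_cast; ring,
    Complex.Gamma_ofReal, Complex.Gamma_ofReal, Complex.Gamma_ofReal] at h
  have hre : Real.Gamma τ * Real.Gamma (τ + 1)
      = Real.Gamma (2 * τ + 1) * ∫ x in (0:ℝ)..1, x ^ (τ - 1) * (1 - x) ^ τ := by
    exact_mod_cast h
  rw [eq_div_iff hne]
  linear_combination -hre

theorem stmt_5 (τ : ℝ) (hτ : τ ∈ Set.Ioo (0 : ℝ) 1) :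
    τ * ∫ x in (0:ℝ)..1, x ^ (τ - 1) * (1 - x) ^ τ
        = τ * Real.Gamma (τ + 1) * Real.Gamma τ / Real.Gamma (2 * τ + 1) ∧
    Tendsto (fun l : ℕ =>
        (1 / (l : ℝ) ^ (2 * τ)) *
          ∑ s ∈ Finset.Icc 1 l, ((s : ℝ) ^ τ - ((s : ℝ) - 1) ^ τ) * ((l : ℝ) - s + 1) ^ τ)
      atTop (nhds (τ * Real.Gamma (1 + τ) * Real.Gamma τ / Real.Gamma (1 + 2 * τ))) := by
  obtain ⟨hτ0, hτ1⟩ := hτ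
  set I := ∫ x in (0:ℝ)..1, x ^ (τ - 1) * (1 - x) ^ τ with hIdef
  have hInn : 0 ≤ τ * I := by
    refine mul_nonneg hτ0.le (intervalIntegral.integral_nonneg (by norm_num) fun u hu => ?_)
    exact mul_nonneg (Real.rpow_nonneg hu.1 _) (Real.rpow_nonneg (by linarith [hu.2]) _)
  constructor
  · rw [hIdef, beta_part hτ0]; ring
  -- per-term rewriting of the sum
  have hS : ∀ l : ℕ,
      ∑ s ∈ Finset.Icc 1 l, ((s : ℝ) ^ τ - ((s : ℝ) - 1) ^ τ) * ((l : ℝ) - s + 1) ^ τ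
        = ∑ k ∈ Finset.range l, (((k : ℝ) + 1) ^ τ - (k : ℝ) ^ τ) * ((l : ℝ) - k) ^ τ := by
    intro l
    rw [← Finset.Ico_add_one_right_eq_Icc, Finset.sum_Ico_eq_sum_range]
    norm_num
    apply Finset.sum_congr rfl
    intro k _
    push_cast
    rw [show (l:ℝ) - (1 + k) + 1 = (l:ℝ) - k by ring,
      show (1:ℝ) + (k:ℝ) = (k:ℝ) + 1 by ring]
  -- two-sided bounds for l ≥ 1
  have hbounds : ∀ l : ℕ, 1 ≤ l →
      (l : ℝ) ^ (2 * τ) * (τ * I)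
        ≤ (∑ s ∈ Finset.Icc 1 l, ((s : ℝ) ^ τ - ((s : ℝ) - 1) ^ τ) * ((l : ℝ) - s + 1) ^ τ)
      ∧ (∑ s ∈ Finset.Icc 1 l, ((s : ℝ) ^ τ - ((s : ℝ) - 1) ^ τ) * ((l : ℝ) - s + 1) ^ τ)
        ≤ ((l : ℝ) + 1) ^ (2 * τ) * (τ * I) := by
    intro l hl
    have hlpos : (0:ℝ) < l := by exact_mod_cast hl
    rw [hS l]
    constructor
    · -- lower bound
      rw [← aux_scaled hτ0 hlpos]
      have hadj : ∫ t in (0:ℝ)..(l:ℝ), τ * t ^ (τ - 1) * ((l:ℝ) - t) ^ τ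
          = ∑ k ∈ Finset.range l, ∫ t in ((k:ℕ):ℝ)..(((k+1:ℕ)):ℝ),
              τ * t ^ (τ - 1) * ((l:ℝ) - t) ^ τ := by
        rw [intervalIntegral.sum_integral_adjacent_intervals
          (fun k _ => aux_integrable hτ0 hτ1 _ _ _)]
        norm_num
      rw [hadj]
      apply Finset.sum_le_sum
      intro k hk
      have hkl : k + 1 ≤ l := Finset.mem_range.mp hk
      have hkl' : (k:ℝ) + 1 ≤ (l:ℝ) := by exact_mod_cast hkl
      have hstep : (((k:ℝ)+1) ^ τ - (k:ℝ) ^ τ) * ((l:ℝ) - k) ^ τ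
          = ∫ t in ((k:ℕ):ℝ)..(((k+1:ℕ)):ℝ), τ * t ^ (τ - 1) * ((l:ℝ) - k) ^ τ := by
        rw [intervalIntegral.integral_mul_const, ftc_piece hτ0]
        push_cast
        ring
      rw [hstep]
      apply intervalIntegral.integral_mono_on (by push_cast; linarith)
        (aux_integrable hτ0 hτ1 _ _ _)
        (((intervalIntegral.intervalIntegrable_rpow' (r := τ - 1)
          (by linarith)).const_mul τ).mul_const _)
      intro t ht
      push_cast at ht
      have ht0 : (0:ℝ) ≤ t := le_trans (Nat.cast_nonneg k) ht.1
      have h1 : (0:ℝ) ≤ τ * t ^ (τ - 1) := mul_nonneg hτ0.le (Real.rpow_nonneg ht0 _)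
      refine mul_le_mul_of_nonneg_left ?_ h1
      exact Real.rpow_le_rpow (by linarith [ht.2]) (by linarith [ht.1]) hτ0.le
    · -- upper bound
      have hcpos : (0:ℝ) < (l:ℝ) + 1 := by linarith
      rw [← aux_scaled hτ0 hcpos]
      have hint1 : ∀ a b : ℝ, IntervalIntegrable
          (fun t => τ * t ^ (τ - 1) * ((l:ℝ) + 1 - t) ^ τ) MeasureTheory.volume a b := by
        intro a b
        simpa using aux_integrable hτ0 hτ1 ((l:ℝ)+1) a b
      have hsplit : ∫ t in (0:ℝ)..((l:ℝ)+1), τ * t ^ (τ - 1) * ((l:ℝ) + 1 - t) ^ τ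
          = (∫ t in (0:ℝ)..(l:ℝ), τ * t ^ (τ - 1) * ((l:ℝ) + 1 - t) ^ τ)
            + ∫ t in (l:ℝ)..((l:ℝ)+1), τ * t ^ (τ - 1) * ((l:ℝ) + 1 - t) ^ τ := by
        rw [intervalIntegral.integral_add_adjacent_intervals (hint1 _ _) (hint1 _ _)]
      calc ∑ k ∈ Finset.range l, (((k : ℝ) + 1) ^ τ - (k : ℝ) ^ τ) * ((l : ℝ) - k) ^ τ
          ≤ ∫ t in (0:ℝ)..(l:ℝ), τ * t ^ (τ - 1) * ((l:ℝ) + 1 - t) ^ τ := by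
            have hadj : ∫ t in (0:ℝ)..(l:ℝ), τ * t ^ (τ - 1) * ((l:ℝ) + 1 - t) ^ τ
                = ∑ k ∈ Finset.range l, ∫ t in ((k:ℕ):ℝ)..(((k+1:ℕ)):ℝ),
                    τ * t ^ (τ - 1) * ((l:ℝ) + 1 - t) ^ τ := by
              rw [intervalIntegral.sum_integral_adjacent_intervals
                (fun k _ => hint1 _ _)]
              norm_num
            rw [hadj]
            apply Finset.sum_le_sum
            intro k hk
            have hkl : k + 1 ≤ l := Finset.mem_range.mp hk
            have hkl' : (k:ℝ) + 1 ≤ (l:ℝ) := by exact_mod_cast hkl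
            have hstep : (((k:ℝ)+1) ^ τ - (k:ℝ) ^ τ) * ((l:ℝ) - k) ^ τ
                = ∫ t in ((k:ℕ):ℝ)..(((k+1:ℕ)):ℝ), τ * t ^ (τ - 1) * ((l:ℝ) - k) ^ τ := by
              rw [intervalIntegral.integral_mul_const, ftc_piece hτ0]
              push_cast
              ring
            rw [hstep]
            apply intervalIntegral.integral_mono_on (by push_cast; linarith)
              (((intervalIntegral.intervalIntegrable_rpow' (r := τ - 1)
                (by linarith)).const_mul τ).mul_const _)
              (hint1 _ _)
            intro t ht
            push_cast at ht
            have ht0 : (0:ℝ) ≤ t := le_trans (Nat.cast_nonneg k) ht.1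
            have h1 : (0:ℝ) ≤ τ * t ^ (τ - 1) := mul_nonneg hτ0.le (Real.rpow_nonneg ht0 _)
            refine mul_le_mul_of_nonneg_left ?_ h1
            exact Real.rpow_le_rpow (by linarith [ht.1, hkl']) (by linarith [ht.2]) hτ0.le
        _ ≤ ∫ t in (0:ℝ)..((l:ℝ)+1), τ * t ^ (τ - 1) * ((l:ℝ) + 1 - t) ^ τ := by
            rw [hsplit]
            have : 0 ≤ ∫ t in (l:ℝ)..((l:ℝ)+1), τ * t ^ (τ - 1) * ((l:ℝ) + 1 - t) ^ τ := by
              apply intervalIntegral.integral_nonneg (by linarith)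
              intro u hu
              exact mul_nonneg (mul_nonneg hτ0.le
                (Real.rpow_nonneg (le_trans hlpos.le hu.1) _))
                (Real.rpow_nonneg (by linarith [hu.2]) _)
            linarith
  -- squeeze
  have hupper : Tendsto (fun l : ℕ => (((l:ℝ) + 1) / l) ^ (2 * τ) * (τ * I)) atTop
      (nhds (τ * I)) := by
    have h1 : Tendsto (fun l : ℕ => ((l:ℝ) + 1) / l) atTop (nhds 1) := by
      have h0 : Tendsto (fun l : ℕ => 1 + ((l:ℝ))⁻¹) atTop (nhds (1 + 0)) :=
        tendsto_const_nhds.add (tendsto_inv_atTop_zero.comp tendsto_natCast_atTop_atTop)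
      rw [add_zero] at h0
      apply h0.congr'
      filter_upwards [eventually_ge_atTop 1] with l hl
      have hl0 : (l:ℝ) ≠ 0 := by positivity
      field_simp
    have h2 : Tendsto (fun x : ℝ => x ^ (2 * τ)) (nhds 1) (nhds ((1:ℝ) ^ (2 * τ))) :=
      (Real.continuous_rpow_const (by linarith)).tendsto 1
    have h3 := (h2.comp h1).mul_const (τ * I)
    rwa [Real.one_rpow, one_mul] at h3
  have hmain : Tendsto (fun l : ℕ =>
      (1 / (l : ℝ) ^ (2 * τ)) *
        ∑ s ∈ Finset.Icc 1 l, ((s : ℝ) ^ τ - ((s : ℝ) - 1) ^ τ) * ((l : ℝ) - s + 1) ^ τ)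
      atTop (nhds (τ * I)) := by
    refine tendsto_of_tendsto_of_tendsto_of_le_of_le' tendsto_const_nhds hupper ?_ ?_
    · filter_upwards [eventually_ge_atTop 1] with l hl
      have hlpos : (0:ℝ) < (l:ℝ) ^ (2 * τ) :=
        Real.rpow_pos_of_pos (by exact_mod_cast hl) _
      rw [one_div, ← div_eq_inv_mul, le_div_iff₀ hlpos]
      calc τ * I * (l:ℝ) ^ (2 * τ) = (l:ℝ) ^ (2 * τ) * (τ * I) := by ring
        _ ≤ _ := (hbounds l hl).1
    · filter_upwards [eventually_ge_atTop 1] with l hl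
      have hl0 : (0:ℝ) < (l:ℝ) := by exact_mod_cast hl
      have hlpos : (0:ℝ) < (l:ℝ) ^ (2 * τ) := Real.rpow_pos_of_pos hl0 _
      rw [one_div, ← div_eq_inv_mul, div_le_iff₀ hlpos]
      calc (∑ s ∈ Finset.Icc 1 l, ((s : ℝ) ^ τ - ((s : ℝ) - 1) ^ τ) * ((l : ℝ) - s + 1) ^ τ)
          ≤ ((l : ℝ) + 1) ^ (2 * τ) * (τ * I) := (hbounds l hl).2
        _ = (((l:ℝ) + 1) / l) ^ (2 * τ) * (τ * I) * (l:ℝ) ^ (2 * τ) := by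
            rw [Real.div_rpow (by linarith) hl0.le]
            field_simp
  have hval : τ * I = τ * Real.Gamma (1 + τ) * Real.Gamma τ / Real.Gamma (1 + 2 * τ) := by
    rw [hIdef, beta_part hτ0, show (1:ℝ) + τ = τ + 1 by ring,
      show (1:ℝ) + 2 * τ = 2 * τ + 1 by ring]
    ring
  rwa [hval] at hmain
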